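/- Let a, b be rational numbers with a·b ≠ 0 and let t be a rational number such that t ≠ 0, 4bt² ≠ 1, a²t + 8bt² ≠ 2, a²t - 8bt² ≠ 2, and 64b²t⁴ - (a⁴+32b)t² + 4 ≠ 0. Define x₁ = 8a(4bt²-1)/(-64b²t⁴+(a⁴+32b)t²-4), x₂ = -32abt²(4bt²-1)/((a²t-8bt²+2)(a²t+8bt²-2)), x₃ = (a²t+8bt²-2)³/(16at(4bt²-1)(a²t-8bt²+2)), and x₄ = a - x₁ - x₂ - x₃. Then x₁+x₂+x₃+x₄ = a and x₁·x₂·x₃·x₄ = b. -/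

import Mathlib

set_option maxHeartbeats 2000000

theorem stmt2 (a b t : ℚ) (hab : a * b ≠ 0) (ht : t ≠ 0)
    (h1 : 4 * b * t ^ 2 ≠ 1)
    (h2 : a ^ 2 * t + 8 * b * t ^ 2 ≠ 2)
    (h3 : a ^ 2 * t - 8 * b * t ^ 2 ≠ 2)
    (h4 : 64 * b ^ 2 * t ^ 4 - (a ^ 4 + 32 * b) * t ^ 2 + 4 ≠ 0) :
    let x1 := 8 * a * (4 * b * t ^ 2 - 1) /
      (-64 * b ^ 2 * t ^ 4 + (a ^ 4 + 32 * b) * t ^ 2 - 4)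
    let x2 := -(32 * a * b * t ^ 2 * (4 * b * t ^ 2 - 1)) /
      ((a ^ 2 * t - 8 * b * t ^ 2 + 2) * (a ^ 2 * t + 8 * b * t ^ 2 - 2))
    let x3 := (a ^ 2 * t + 8 * b * t ^ 2 - 2) ^ 3 /
      (16 * a * t * (4 * b * t ^ 2 - 1) * (a ^ 2 * t - 8 * b * t ^ 2 + 2))
    let x4 := a - x1 - x2 - x3
    x1 + x2 + x3 + x4 = a ∧ x1 * x2 * x3 * x4 = b := by
  intro x1 x2 x3 x4
  have ha : a ≠ 0 := fun h => hab (by simp [h])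
  have hd1 : (4 : ℚ) * b * t ^ 2 - 1 ≠ 0 := sub_ne_zero.mpr h1
  have hQ : a ^ 2 * t + 8 * b * t ^ 2 - 2 ≠ 0 := sub_ne_zero.mpr h2
  have key : 64 * b ^ 2 * t ^ 4 - (a ^ 4 + 32 * b) * t ^ 2 + 4 =
      -((a ^ 2 * t - 8 * b * t ^ 2 + 2) * (a ^ 2 * t + 8 * b * t ^ 2 - 2)) := by ring
  have hP : a ^ 2 * t - 8 * b * t ^ 2 + 2 ≠ 0 := by
    intro h; exact h4 (by rw [key, h]; ring)
  have hd4 : -64 * b ^ 2 * t ^ 4 + (a ^ 4 + 32 * b) * t ^ 2 - 4 ≠ 0 := by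
    intro h; exact h4 (by linarith)
  have hD : 16 * a * t * (4 * b * t ^ 2 - 1) * (a ^ 2 * t - 8 * b * t ^ 2 + 2) *
      (a ^ 2 * t + 8 * b * t ^ 2 - 2) ≠ 0 :=
    mul_ne_zero (mul_ne_zero (mul_ne_zero (mul_ne_zero (mul_ne_zero (by norm_num) ha) ht) hd1) hP) hQ
  have hx1 : x1 = 128 * a ^ 2 * t * (4 * b * t ^ 2 - 1) ^ 2 /
      (16 * a * t * (4 * b * t ^ 2 - 1) * (a ^ 2 * t - 8 * b * t ^ 2 + 2) *
      (a ^ 2 * t + 8 * b * t ^ 2 - 2)) := by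
    show _ / _ = _
    rw [div_eq_div_iff hd4 hD]; ring
  have hx2 : x2 = -(512 * a ^ 2 * b * t ^ 3 * (4 * b * t ^ 2 - 1) ^ 2) /
      (16 * a * t * (4 * b * t ^ 2 - 1) * (a ^ 2 * t - 8 * b * t ^ 2 + 2) *
      (a ^ 2 * t + 8 * b * t ^ 2 - 2)) := by
    show _ / _ = _
    rw [div_eq_div_iff (mul_ne_zero hP hQ) hD]; ring
  have hx3 : x3 = (a ^ 2 * t + 8 * b * t ^ 2 - 2) ^ 4 /
      (16 * a * t * (4 * b * t ^ 2 - 1) * (a ^ 2 * t - 8 * b * t ^ 2 + 2) *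
      (a ^ 2 * t + 8 * b * t ^ 2 - 2)) := by
    show _ / _ = _
    rw [div_eq_div_iff (mul_ne_zero (mul_ne_zero (mul_ne_zero (mul_ne_zero (by norm_num) ha) ht) hd1) hP) hD]
    ring
  have hx4 : x4 = (a * (16 * a * t * (4 * b * t ^ 2 - 1) * (a ^ 2 * t - 8 * b * t ^ 2 + 2) *
      (a ^ 2 * t + 8 * b * t ^ 2 - 2)) - 128 * a ^ 2 * t * (4 * b * t ^ 2 - 1) ^ 2
      + 512 * a ^ 2 * b * t ^ 3 * (4 * b * t ^ 2 - 1) ^ 2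
      - (a ^ 2 * t + 8 * b * t ^ 2 - 2) ^ 4) /
      (16 * a * t * (4 * b * t ^ 2 - 1) * (a ^ 2 * t - 8 * b * t ^ 2 + 2) *
      (a ^ 2 * t + 8 * b * t ^ 2 - 2)) := by
    show a - x1 - x2 - x3 = _
    rw [hx1, hx2, hx3, eq_div_iff hD]
    rw [sub_mul, sub_mul, sub_mul, div_mul_cancel₀ _ hD, div_mul_cancel₀ _ hD, div_mul_cancel₀ _ hD]
    ring
  constructor
  · show x1 + x2 + x3 + (a - x1 - x2 - x3) = a; ring
  · rw [hx1, hx2, hx3, hx4, div_mul_div_comm, div_mul_div_comm, div_mul_div_comm,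
      div_eq_iff (by positivity)]
    ring
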